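/- (Zero-one law for sufficiently symmetric infinite random graphs) Let G = (V, E) be a countably infinite simple graph such that for every finite set A ⊆ V of vertices, G has a graph automorphism θ with θ(A) ∩ A = ∅. Fix p ∈ [0,1] and let (X_e)_{e∈E} be i.i.d. Bernoulli(p) random variables indexed by the edges, so that X encodes the random subgraph of G in which each edge is independently kept with probability p. Then for every measurable subset P ⊆ {0,1}^E that is invariant under the maps on {0,1}^E induced by all automorphisms of G (i.e., P represents a graph-theoretic property of subgraphs of G), one has P(X ∈ P) ∈ {0, 1}. -/

import Mathlib

open MeasureTheory ProbabilityTheory ENNReal Set symmDiff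

lemma tuple_meas_aux {Ω ι : Type*} [MeasurableSpace Ω] (Pr : Measure Ω)
    (Z : ι → Ω → Bool) (hm : ∀ i, Measurable (Z i))
    (hind : ∀ (F : Finset ι) (g : ι → Set Ω),
      (∀ i ∈ F, MeasurableSet[(inferInstance : MeasurableSpace Bool).comap (Z i)] (g i)) →
      Pr (⋂ i ∈ F, g i) = ∏ i ∈ F, Pr (g i))
    (F : Finset ι) (S : Set ((i : F) → Bool)) :
    Pr ((fun ω (i : F) => Z i ω) ⁻¹' S)
      = ∑ b ∈ (Set.toFinite S).toFinset, ∏ i ∈ F.attach, Pr (Z i ⁻¹' {b i}) := by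
  classical
  have htuple : Measurable (fun ω (i : F) => Z i ω) := measurable_pi_lambda _ fun i => hm i
  have hdecomp : (fun ω (i : F) => Z i ω) ⁻¹' S
      = ⋃ b ∈ (Set.toFinite S).toFinset, (fun ω (i : F) => Z i ω) ⁻¹' {b} := by
    ext x
    simp only [Set.mem_preimage, Set.mem_iUnion, Set.Finite.mem_toFinset, Set.mem_singleton_iff]
    exact ⟨fun h => ⟨_, h, rfl⟩, fun ⟨b, hb, hx⟩ => hx ▸ hb⟩
  rw [hdecomp, measure_biUnion_finset ?hd ?hmb]
  case hd =>
    intro b _ c _ hbc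
    exact Set.disjoint_singleton.mpr hbc |>.preimage _
  case hmb =>
    intro b _
    exact htuple (measurableSet_singleton b)
  refine Finset.sum_congr rfl fun b _ => ?_
  set bb : ι → Bool := fun j => if h : j ∈ F then b ⟨j, h⟩ else false with hbbdef
  have hbb : ∀ i : F, bb i = b i := fun i => dif_pos i.2
  have hpre : (fun ω (i : F) => Z i ω) ⁻¹' {b} = ⋂ i ∈ F, Z i ⁻¹' {bb i} := by
    ext ω
    simp only [Set.mem_preimage, Set.mem_singleton_iff, Set.mem_iInter, funext_iff]
    constructor
    · intro h i hi
      rw [show bb i = b ⟨i, hi⟩ from dif_pos hi]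
      exact h ⟨i, hi⟩
    · intro h i
      rw [← hbb i]
      exact h i.1 i.2
  rw [hpre, hind F _ (fun i hi => MeasurableSpace.measurableSet_comap.mpr
      ⟨{bb i}, measurableSet_singleton _, rfl⟩)]
  rw [← Finset.prod_attach F fun j => Pr (Z j ⁻¹' {bb j})]
  exact Finset.prod_congr rfl fun i _ => by rw [hbb i]

/-- **Zero-one law for sufficiently symmetric infinite random graphs.**
Let `G` be a countably infinite simple graph such that for every finite set `A` of
vertices there is an automorphism `θ` of `G` with `θ(A) ∩ A = ∅`.  Let `(X_e)_{e ∈ E(G)}`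
be i.i.d. Bernoulli(`p`) random variables encoding a random subgraph of `G`.
Then every measurable set `P ⊆ {0,1}^{E(G)}` invariant under the maps induced by all
automorphisms of `G` (a graph-theoretic property) satisfies `P(X ∈ P) ∈ {0,1}`. -/
theorem random_subgraph_zero_one_law
    {V : Type*} [Countable V] [Infinite V] (G : SimpleGraph V)
    (hsym : ∀ A : Finset V, ∃ θ : G ≃g G, ∀ v ∈ A, θ v ∉ A)
    {Ω : Type*} [MeasurableSpace Ω] (Pr : Measure Ω) [IsProbabilityMeasure Pr]
    (p : ℝ≥0∞) (hp : p ≤ 1)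
    (X : G.edgeSet → Ω → Bool) (hmeas : ∀ e, Measurable (X e))
    (hindep : iIndepFun X Pr)
    (hdist : ∀ e, Measure.map (X e) Pr = (PMF.bernoulli p.toNNReal (by simpa using ENNReal.toNNReal_mono ENNReal.one_ne_top hp)).toMeasure)
    (P : Set (G.edgeSet → Bool)) (hP : MeasurableSet P)
    (hinv : ∀ (θ : G ≃g G) (a : G.edgeSet → Bool),
      a ∈ P ↔ (fun e => a (θ.mapEdgeSet e)) ∈ P) :
    Pr {ω | (fun e => X e ω) ∈ P} = 0 ∨ Pr {ω | (fun e => X e ω) ∈ P} = 1 := by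
  classical
  set Xf : Ω → (G.edgeSet → Bool) := fun ω e => X e ω with hXfdef
  have hXfm : Measurable Xf := measurable_pi_lambda _ hmeas
  haveI : IsProbabilityMeasure (Measure.map Xf Pr) := Measure.isProbabilityMeasure_map hXfm.aemeasurable
  have hmargX : ∀ (e e' : G.edgeSet) (s : Set Bool), Pr (X e ⁻¹' s) = Pr (X e' ⁻¹' s) := by
    intro e e' s
    have hs : MeasurableSet s := s.toFinite.measurableSet
    rw [← Measure.map_apply (hmeas e) hs, ← Measure.map_apply (hmeas e') hs, hdist, hdist]
  have hgoal : Pr {ω | (fun e => X e ω) ∈ P} = Pr (Xf ⁻¹' P) := rfl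
  rw [hgoal]
  set a := Pr (Xf ⁻¹' P) with hadef
  have hane : a ≠ ∞ := measure_ne_top _ _
  have key : ∀ ε : ℝ, 0 < ε → |a.toReal - a.toReal * a.toReal| ≤ 4 * ε := by
    intro ε hε
    -- measure-dense approximation by cylinders
    have hdense : (Measure.map Xf Pr).MeasureDense
        (measurableCylinders (fun _ : G.edgeSet => Bool)) :=
      Measure.MeasureDense.of_generateFrom_isSetAlgebra_finite (Measure.map Xf Pr)
        ⟨empty_mem_measurableCylinders _, fun _ hs => compl_mem_measurableCylinders hs,
          fun _ _ hs ht => union_mem_measurableCylinders hs ht⟩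
        generateFrom_measurableCylinders.symm
    obtain ⟨t, htmem, htε⟩ := hdense.approx P hP (measure_ne_top _ _) ε hε
    obtain ⟨F, S, hSmeas, rfl⟩ := (mem_measurableCylinders t).mp htmem
    -- the vertex set of F
    have hSym2fin : ∀ s : Sym2 V, {v : V | v ∈ s}.Finite := by
      intro s
      induction s using Sym2.ind with
      | _ x y =>
        have h : {v : V | v ∈ s(x, y)} = {x, y} := by ext v; simp [Sym2.mem_iff]
        rw [h]; exact (Set.finite_singleton y).insert x
    have hA0fin : (⋃ e ∈ F, {v : V | v ∈ (e : G.edgeSet).1}).Finite :=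
      Set.Finite.biUnion F.finite_toSet (fun e _ => hSym2fin e.1)
    set A0 : Finset V := hA0fin.toFinset with hA0def
    have hvertF : ∀ e ∈ F, ∀ v, v ∈ (e : G.edgeSet).1 → v ∈ A0 := by
      intro e he v hv
      rw [hA0def, Set.Finite.mem_toFinset]
      exact Set.mem_biUnion he hv
    obtain ⟨θ, hθ⟩ := hsym A0
    set σ : G.edgeSet ≃ G.edgeSet := θ.mapEdgeSet with hσdef
    have hσ1 : ∀ e : G.edgeSet, (σ e).1 = Sym2.map θ e.1 := fun e => rfl
    have hdisj : Disjoint F (F.image σ) := by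
      rw [Finset.disjoint_right]
      intro e' he'
      obtain ⟨e, he, rfl⟩ := Finset.mem_image.mp he'
      intro hσeF
      have hw : (Quot.out e.1).1 ∈ e.1 := Sym2.out_fst_mem e.1
      have hwA0 : (Quot.out e.1).1 ∈ A0 := hvertF e he _ hw
      have hθw : θ (Quot.out e.1).1 ∈ (σ e).1 := by
        rw [hσ1]
        exact Sym2.mem_map.mpr ⟨_, hw, rfl⟩
      exact hθ _ hwA0 (hvertF _ hσeF _ hθw)
    -- the reflected family
    set Yf : Ω → (G.edgeSet → Bool) := fun ω e => X (σ e) ω with hYfdef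
    have hYfm : Measurable Yf := measurable_pi_lambda _ fun e => hmeas (σ e)
    haveI : IsProbabilityMeasure (Measure.map Yf Pr) := Measure.isProbabilityMeasure_map hYfm.aemeasurable
    have hAY : Xf ⁻¹' P = Yf ⁻¹' P := by
      ext ω
      exact hinv θ (Xf ω)
    have hindY : ∀ (F' : Finset G.edgeSet) (g : G.edgeSet → Set Ω),
        (∀ i ∈ F', MeasurableSet[(inferInstance : MeasurableSpace Bool).comap
            (fun ω => X (σ i) ω)] (g i)) →
        Pr (⋂ i ∈ F', g i) = ∏ i ∈ F', Pr (g i) := by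
      intro F' g hg
      have h1 : (⋂ i ∈ F', g i) = ⋂ j ∈ F'.image σ, g (σ.symm j) := by
        rw [Finset.set_biInter_finset_image]
        refine Set.iInter₂_congr fun i hi => ?_
        rw [Equiv.symm_apply_apply]
      have h2 : Pr (⋂ j ∈ F'.image σ, g (σ.symm j)) = ∏ j ∈ F'.image σ, Pr (g (σ.symm j)) := by
        refine hindep.meas_biInter ?_
        intro j hj
        obtain ⟨i, hi, rfl⟩ := Finset.mem_image.mp hj
        simpa [Equiv.symm_apply_apply] using hg i hi
      rw [h1, h2, Finset.prod_image (fun i _ j _ h => σ.injective h)]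
      refine Finset.prod_congr rfl fun i _ => ?_
      rw [Equiv.symm_apply_apply]
    have hlaw : Measure.map Yf Pr = Measure.map Xf Pr := by
      refine ext_of_generate_finite _ generateFrom_measurableCylinders.symm
        isPiSystem_measurableCylinders (fun s hs => ?_) (by simp)
      obtain ⟨F', S', hS', rfl⟩ := (mem_measurableCylinders s).mp hs
      rw [Measure.map_apply hYfm (MeasurableSet.cylinder _ hS'),
        Measure.map_apply hXfm (MeasurableSet.cylinder _ hS')]
      have hXcyl : Xf ⁻¹' cylinder F' S' = (fun ω (i : F') => X i ω) ⁻¹' S' := rfl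
      have hYcyl : Yf ⁻¹' cylinder F' S' = (fun ω (i : F') => X (σ i) ω) ⁻¹' S' := rfl
      rw [hXcyl, hYcyl, tuple_meas_aux Pr _ (fun i => hmeas (σ i)) hindY F' S',
        tuple_meas_aux Pr X hmeas (fun _ _ hg => hindep.meas_biInter hg) F' S']
      exact Finset.sum_congr rfl fun b _ => Finset.prod_congr rfl fun i _ => hmargX _ _ _
    -- basic events
    set B :=  Xf ⁻¹' cylinder F S with hBdef
    set B' := Yf ⁻¹' cylinder F S with hB'def
    set D :=  Xf ⁻¹' (P ∆ cylinder F S) with hDdef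
    set D' := Yf ⁻¹' (P ∆ cylinder F S) with hD'def
    have hΔmeas : MeasurableSet (P ∆ cylinder F S) := hP.symmDiff (MeasurableSet.cylinder _ hSmeas)
    have hDε : Pr D < ENNReal.ofReal ε := by
      rw [hDdef, ← Measure.map_apply hXfm hΔmeas]
      exact htε
    have hD'ε : Pr D' < ENNReal.ofReal ε := by
      rw [hD'def, ← Measure.map_apply hYfm hΔmeas, hlaw]
      exact htε
    have hB'B : Pr B' = Pr B := by
      rw [hB'def, hBdef, ← Measure.map_apply hYfm (MeasurableSet.cylinder _ hSmeas), hlaw,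
        Measure.map_apply hXfm (MeasurableSet.cylinder _ hSmeas)]
    have hBmul : Pr (B ∩ B') = Pr B * Pr B' := by
      have hIF := hindep.indepFun_finset F (F.image σ) hdisj hmeas
      have h1 : B = (fun ω (i : F) => X i ω) ⁻¹' S := rfl
      have h2 : B' = (fun ω (i : F.image σ) => X i ω) ⁻¹'
          ((fun (g : (i : F.image σ) → Bool) (i : F) =>
            g ⟨σ i, Finset.mem_image_of_mem σ i.2⟩) ⁻¹' S) := rfl
      rw [h1, h2]
      exact hIF.measure_inter_preimage_eq_mul _ _ S.toFinite.measurableSet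
        (Set.toFinite _).measurableSet
    -- set inclusions
    have incl1 : Xf ⁻¹' P ⊆ ((B ∩ B') ∪ D) ∪ D' := by
      intro ω hω
      by_cases hb : ω ∈ B
      · by_cases hb' : ω ∈ B'
        · exact Or.inl (Or.inl ⟨hb, hb'⟩)
        · refine Or.inr ?_
          have hωY : Yf ω ∈ P := by rw [← Set.mem_preimage, ← hAY]; exact hω
          exact Set.mem_preimage.mpr (Or.inl ⟨hωY, hb'⟩)
      · exact Or.inl (Or.inr (Set.mem_preimage.mpr (Or.inl ⟨hω, hb⟩)))
    have incl2 : B ∩ B' ⊆ Xf ⁻¹' P ∪ D := by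
      intro ω hω
      by_cases hp' : ω ∈ Xf ⁻¹' P
      · exact Or.inl hp'
      · exact Or.inr (Set.mem_preimage.mpr (Or.inr ⟨hω.1, hp'⟩))
    have incl3 : B ⊆ Xf ⁻¹' P ∪ D := by
      intro ω hω
      by_cases hp' : ω ∈ Xf ⁻¹' P
      · exact Or.inl hp'
      · exact Or.inr (Set.mem_preimage.mpr (Or.inr ⟨hω, hp'⟩))
    have incl4 : Xf ⁻¹' P ⊆ B ∪ D := by
      intro ω hω
      by_cases hb : ω ∈ B
      · exact Or.inl hb
      · exact Or.inr (Set.mem_preimage.mpr (Or.inl ⟨hω, hb⟩))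
    set b := Pr B with hbdef
    have hbne : b ≠ ∞ := measure_ne_top _ _
    have e1 : a ≤ b * b + ENNReal.ofReal ε + ENNReal.ofReal ε := by
      calc a ≤ Pr (((B ∩ B') ∪ D) ∪ D') := measure_mono incl1
        _ ≤ Pr ((B ∩ B') ∪ D) + Pr D' := measure_union_le _ _
        _ ≤ Pr (B ∩ B') + Pr D + Pr D' := by
            exact add_le_add_left (measure_union_le _ _) _
        _ ≤ b * b + ENNReal.ofReal ε + ENNReal.ofReal ε := by
            rw [hBmul, hB'B]
            exact add_le_add (add_le_add le_rfl hDε.le) hD'ε.le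
    have e2 : b * b ≤ a + ENNReal.ofReal ε := by
      calc b * b = Pr (B ∩ B') := by rw [hBmul, hB'B]
        _ ≤ Pr (Xf ⁻¹' P ∪ D) := measure_mono incl2
        _ ≤ a + ENNReal.ofReal ε := le_trans (measure_union_le _ _) (add_le_add le_rfl hDε.le)
    have e3 : b ≤ a + ENNReal.ofReal ε :=
      le_trans (measure_mono incl3) (le_trans (measure_union_le _ _) (add_le_add le_rfl hDε.le))
    have e4 : a ≤ b + ENNReal.ofReal ε :=
      le_trans (measure_mono incl4) (le_trans (measure_union_le _ _) (add_le_add le_rfl hDε.le))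
    -- pass to real numbers
    have hconv : ∀ x y : ℝ≥0∞, x ≠ ∞ → y ≠ ∞ → x ≤ y → x.toReal ≤ y.toReal :=
      fun x y hx hy h => ENNReal.toReal_le_toReal hx hy |>.mpr h
    have r1 : a.toReal ≤ b.toReal * b.toReal + ε + ε := by
      have := hconv _ _ hane (by finiteness) e1
      rwa [ENNReal.toReal_add (by finiteness) (by finiteness),
        ENNReal.toReal_add (by finiteness) (by finiteness), ENNReal.toReal_mul,
        ENNReal.toReal_ofReal hε.le] at this
    have r2 : b.toReal * b.toReal ≤ a.toReal + ε := by
      have := hconv _ _ (by finiteness) (by finiteness) e2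
      rwa [ENNReal.toReal_add hane (by finiteness), ENNReal.toReal_mul,
        ENNReal.toReal_ofReal hε.le] at this
    have r3 : b.toReal ≤ a.toReal + ε := by
      have := hconv _ _ hbne (by finiteness) e3
      rwa [ENNReal.toReal_add hane (by finiteness), ENNReal.toReal_ofReal hε.le] at this
    have r4 : a.toReal ≤ b.toReal + ε := by
      have := hconv _ _ hane (by finiteness) e4
      rwa [ENNReal.toReal_add hbne (by finiteness), ENNReal.toReal_ofReal hε.le] at this
    have ha0 : 0 ≤ a.toReal := ENNReal.toReal_nonneg
    have hb0 : 0 ≤ b.toReal := ENNReal.toReal_nonneg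
    have ha1 : a.toReal ≤ 1 := by
      have := hconv _ _ hane one_ne_top prob_le_one
      simpa using this
    have hb1 : b.toReal ≤ 1 := by
      have := hconv _ _ hbne one_ne_top prob_le_one
      simpa using this
    rw [abs_le]
    constructor <;> nlinarith [sq_nonneg (a.toReal - b.toReal), sq_nonneg (a.toReal + b.toReal)]
  -- conclude
  have h0 : |a.toReal - a.toReal * a.toReal| = 0 := by
    by_contra h
    have hpos : 0 < |a.toReal - a.toReal * a.toReal| :=
      lt_of_le_of_ne (abs_nonneg _) (Ne.symm h)
    have := key (|a.toReal - a.toReal * a.toReal| / 5) (by positivity)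
    linarith
  have hra : a.toReal = a.toReal * a.toReal := by
    rwa [abs_eq_zero, sub_eq_zero] at h0
  have hcases : a.toReal = 0 ∨ a.toReal = 1 := by
    rcases mul_eq_zero.mp (show a.toReal * (a.toReal - 1) = 0 by ring_nf; linarith) with h | h
    · exact Or.inl h
    · exact Or.inr (by linarith)
  rcases hcases with h | h
  · left
    rcases (ENNReal.toReal_eq_zero_iff a).mp h with h' | h'
    · exact h'
    · exact absurd h' hane
  · right
    exact (ENNReal.toReal_eq_one_iff a).mp h
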